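/- Let a, b, c be natural numbers with c ≠ a ⊕ b (where ⊕ denotes the Nim sum). Then the number of large vertices of the triple (a,b,c) is exactly 1 or exactly 3; that is, the number of true statements among a > b ⊕ c, b > a ⊕ c, and c > a ⊕ b equals 1 or 3. -/

import Mathlib

/-- If the xor of `x` and `y` has most significant bit `k`, then `x > y` iff
bit `k` of `x` is set. -/
lemma xor_gt_iff_testBit (x y k : ℕ) (hk : (x ^^^ y).testBit k = true)
    (hmax : ∀ j, k < j → (x ^^^ y).testBit j = false) :
    x > y ↔ x.testBit k = true := by
  have hne : x.testBit k ≠ y.testBit k := by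
    intro he
    simp [Nat.testBit_xor, he] at hk
  have heq : ∀ j, k < j → x.testBit j = y.testBit j := by
    intro j hj
    have := hmax j hj
    simp [Nat.testBit_xor] at this
    exact this
  constructor
  · intro hgt
    by_contra hx
    have hx' : x.testBit k = false := by simpa using hx
    have hy' : y.testBit k = true := by
      cases hy : y.testBit k with
      | false => exact absurd (hx'.trans hy.symm) hne
      | true => rfl
    have : x < y := Nat.lt_of_testBit k hx' hy' (fun j hj => heq j hj)
    omega
  · intro hx
    have hy' : y.testBit k = false := by
      cases hy : y.testBit k with
      | true => exact absurd (hx.trans hy.symm) hne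
      | false => rfl
    exact Nat.lt_of_testBit k hy' hx (fun j hj => (heq j hj).symm)

theorem nim_large_count_one_or_three (a b c : ℕ) (h : c ≠ a ^^^ b) :
    ((if a > b ^^^ c then 1 else 0) + (if b > a ^^^ c then 1 else 0) +
      (if c > a ^^^ b then 1 else 0) : ℕ) = 1 ∨
    ((if a > b ^^^ c then 1 else 0) + (if b > a ^^^ c then 1 else 0) +
      (if c > a ^^^ b then 1 else 0) : ℕ) = 3 := by
  set d := a ^^^ b ^^^ c with hd
  have hdne : d ≠ 0 := by
    intro h0
    apply h
    have : a ^^^ b = c := by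
      have := xor_eq_zero_iff.mp h0
      exact this
    omega
  obtain ⟨k, hk, hmax⟩ := Nat.exists_most_significant_bit hdne
  have e1 : a ^^^ (b ^^^ c) = d := by rw [hd, Nat.xor_assoc]
  have e2 : b ^^^ (a ^^^ c) = d := by
    rw [hd]
    rw [Nat.xor_comm a b, Nat.xor_assoc]
  have e3 : c ^^^ (a ^^^ b) = d := by rw [hd, Nat.xor_comm]
  have hmax' : ∀ j, k < j → d.testBit j = false := by
    intro j hj
    have := hmax j hj
    simpa using this
  have ha : a > b ^^^ c ↔ a.testBit k = true :=
    xor_gt_iff_testBit a (b ^^^ c) k (by rw [e1]; exact hk) (by rw [e1]; exact hmax')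
  have hb : b > a ^^^ c ↔ b.testBit k = true :=
    xor_gt_iff_testBit b (a ^^^ c) k (by rw [e2]; exact hk) (by rw [e2]; exact hmax')
  have hc : c > a ^^^ b ↔ c.testBit k = true :=
    xor_gt_iff_testBit c (a ^^^ b) k (by rw [e3]; exact hk) (by rw [e3]; exact hmax')
  have hpar : xor (a.testBit k) (xor (b.testBit k) (c.testBit k)) = true := by
    have : d.testBit k = true := hk
    rw [hd] at this
    simpa [Nat.testBit_xor, Bool.xor_assoc] using this
  rw [if_congr ha rfl rfl, if_congr hb rfl rfl, if_congr hc rfl rfl]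
  cases hA : a.testBit k <;> cases hB : b.testBit k <;> cases hC : c.testBit k <;>
    simp_all
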